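/- Suppose the box I'×J' (1-δ)-covers a path τ, meaning the initial (resp. final) vertex of the subpath τ_{I'} is within δ·μ(I') vertical units of (min I', min J') (resp. (max I', max J')). Then the normalized cost of the box satisfies ncost(I'×J') ≤ ncost(τ_{I'}) + 2δ, where ncost(I'×J') is the minimum cost of a corner-to-corner path in the induced grid graph divided by μ(I'). -/

import Mathlib

open List

/-- Costs of the edit operations (removed from Mathlib; restored with its old meaning). -/
structure Levenshtein.Cost (α β δ : Type*) where
  delete : α → δ
  insert : β → δ
  substitute : α → β → δ

/-- The default unit cost (as in the old Mathlib). -/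
def Levenshtein.defaultCost {α : Type*} [DecidableEq α] : Levenshtein.Cost α α ℕ where
  delete _ := 1
  insert _ := 1
  substitute a b := if a = b then 0 else 1

/-- Levenshtein distance with cost `C`, by the recursion characterizing the old Mathlib
definition (`levenshtein_nil_nil`, `levenshtein_nil_cons`, `levenshtein_cons_nil`,
`levenshtein_cons_cons`). -/
def levenshtein {α β δ : Type*} [AddZeroClass δ] [Min δ] (C : Levenshtein.Cost α β δ) :
    List α → List β → δ
  | [], [] => 0
  | [], y :: ys => C.insert y + levenshtein C [] ys
  | x :: xs, [] => C.delete x + levenshtein C xs []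
  | x :: xs, y :: ys =>
    min (C.delete x + levenshtein C xs (y :: ys))
      (min (C.insert y + levenshtein C (x :: xs) ys) (C.substitute x y + levenshtein C xs ys))
termination_by xs ys => xs.length + ys.length

/-- Edit distance between two lists (Levenshtein distance with unit costs). -/
def edist {α : Type*} [DecidableEq α] (x y : List α) : ℕ :=
  levenshtein Levenshtein.defaultCost x y

/-- The substring of `x` indexed by the interval `I = {I.1, ..., I.2}` minus its minimum,
i.e. the characters `x_{I.1+1}, ..., x_{I.2}` (1-indexed). -/
def sub {α : Type*} (x : List α) (I : ℕ × ℕ) : List α :=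
  (x.drop I.1).take (I.2 - I.1)

/-- A single step in a grid graph: horizontal, vertical, or diagonal. -/
def IsStep (p q : ℕ × ℕ) : Prop :=
  q = (p.1 + 1, p.2) ∨ q = (p.1, p.2 + 1) ∨ q = (p.1 + 1, p.2 + 1)

/-- Cost of a step in the grid graph `G_{x,y}`: H- and V-steps cost 1, a D-step from `p`
costs 0 iff `x_{p.1+1} = y_{p.2+1}`. -/
def stepCost {α : Type*} [DecidableEq α] (x y : List α) (p q : ℕ × ℕ) : ℕ :=
  if q = (p.1 + 1, p.2 + 1) then (if x[p.1]? = y[p.2]? then 0 else 1) else 1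

/-- Cost of a path (list of vertices) in `G_{x,y}`. -/
def pathCost {α : Type*} [DecidableEq α] (x y : List α) (τ : List (ℕ × ℕ)) : ℕ :=
  ((τ.zip τ.tail).map (fun e => stepCost x y e.1 e.2)).sum

def IsPath (τ : List (ℕ × ℕ)) : Prop := τ.Chain' IsStep

def IsPathFrom (τ : List (ℕ × ℕ)) (a b : ℕ × ℕ) : Prop :=
  IsPath τ ∧ τ.head? = some a ∧ τ.getLast? = some b

/-- Minimum cost of a corner-to-corner path in the box `I × J` of `G_{x,y}`. -/
noncomputable def boxCost {α : Type*} [DecidableEq α] (x y : List α) (I J : ℕ × ℕ) : ℕ :=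
  sInf {c | ∃ τ, IsPathFrom τ (I.1, J.1) (I.2, J.2) ∧ pathCost x y τ = c}

/-- A path crosses the box `I × J`: all its vertices lie in the box and its horizontal
projection is exactly `I`. -/
def Crosses (τ : List (ℕ × ℕ)) (I J : ℕ × ℕ) : Prop :=
  IsPath τ ∧ τ ≠ [] ∧
  (∀ v ∈ τ, I.1 ≤ v.1 ∧ v.1 ≤ I.2 ∧ J.1 ≤ v.2 ∧ v.2 ≤ J.2) ∧
  τ.head?.map Prod.fst = some I.1 ∧ τ.getLast?.map Prod.fst = some I.2

/-- `σ` is the minimal subpath `τ_I` of `τ` whose horizontal projection is `I`. -/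
def IsCrossSubpath (τ σ : List (ℕ × ℕ)) (I : ℕ × ℕ) : Prop :=
  σ <:+: τ ∧ σ ≠ [] ∧
  (∀ v ∈ σ, I.1 ≤ v.1 ∧ v.1 ≤ I.2) ∧
  σ.head?.map Prod.fst = some I.1 ∧ σ.getLast?.map Prod.fst = some I.2 ∧
  (∀ v ∈ σ.tail, v.1 ≠ I.1) ∧ (∀ v ∈ σ.dropLast, v.1 ≠ I.2)

/-- The box `I × J` `(1-δ)`-covers a path whose relevant subpath is `σ`: the start (end)
vertex of `σ` is within `δ·μ(I)` vertical units of the lower-left (upper-right) corner. -/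
def CoversAt (δ : ℚ) (I J : ℕ × ℕ) (σ : List (ℕ × ℕ)) : Prop :=
  ∃ s e : ℕ × ℕ, σ.head? = some s ∧ σ.getLast? = some e ∧
    |(s.2 : ℚ) - (J.1 : ℚ)| ≤ δ * ((I.2 : ℚ) - (I.1 : ℚ)) ∧
    |(e.2 : ℚ) - (J.2 : ℚ)| ≤ δ * ((I.2 : ℚ) - (I.1 : ℚ))

namespace Stmt5Aux

def clh (J : ℕ × ℕ) (t : ℕ) : ℕ := min (max t J.1) J.2
def cl (J : ℕ × ℕ) (v : ℕ × ℕ) : ℕ × ℕ := (v.1, clh J v.2)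
def phi (J : ℕ × ℕ) (v : ℕ × ℕ) : ℤ := max ((J.1 : ℤ) - v.2) 0
def psi (J : ℕ × ℕ) (v : ℕ × ℕ) : ℤ := max ((v.2 : ℤ) - J.2) 0

lemma pathCost_cons_cons {α : Type*} [DecidableEq α] (x y : List α) (p q : ℕ × ℕ)
    (l : List (ℕ × ℕ)) :
    pathCost x y (p :: q :: l) = stepCost x y p q + pathCost x y (q :: l) := rfl

lemma cons_path {α : Type*} [DecidableEq α] (x y : List α) {τ : List (ℕ × ℕ)} {a b : ℕ × ℕ}
    (h : IsPathFrom τ a b) (v : ℕ × ℕ) (hs : IsStep v a) :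
    IsPathFrom (v :: τ) v b ∧ pathCost x y (v :: τ) = stepCost x y v a + pathCost x y τ := by
  obtain ⟨hc, hh, hl⟩ := h
  cases τ with
  | nil => simp at hh
  | cons w ts =>
    simp only [head?_cons, Option.some_inj] at hh
    subst hh
    have hc' : Chain' IsStep (w :: ts) := hc
    refine ⟨⟨hc'.cons (by simp [hs]), rfl, ?_⟩, pathCost_cons_cons x y v w ts⟩
    · rw [getLast?_cons_cons]; exact hl

lemma phi_anti (J : ℕ × ℕ) (v w : ℕ × ℕ) (h : v.2 ≤ w.2) : phi J w ≤ phi J v := by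
  simp only [phi]; omega

lemma psi_mono (J : ℕ × ℕ) (v w : ℕ × ℕ) (h : v.2 ≤ w.2) : psi J v ≤ psi J w := by
  simp only [psi]; omega

lemma step_clamp {α : Type*} [DecidableEq α] (x y : List α) (J : ℕ × ℕ) (hJ : J.1 ≤ J.2)
    {v w : ℕ × ℕ} (h : IsStep v w) (hne : cl J v ≠ cl J w) :
    IsStep (cl J v) (cl J w) ∧
    (stepCost x y (cl J v) (cl J w) : ℤ) ≤
      stepCost x y v w + (phi J v - phi J w) + (psi J w - psi J v) := by
  rcases h with h | h | h
  · -- horizontal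
    subst h
    constructor
    · left; simp [cl, clh]
    · simp only [phi, psi]
      have h1 : stepCost x y (cl J v) (cl J (v.1 + 1, v.2)) = 1 := by
        have hd : cl J (v.1 + 1, v.2) ≠ ((cl J v).1 + 1, (cl J v).2 + 1) := by
          simp only [cl, clh, ne_eq, Prod.mk.injEq, not_and]
          intro _; omega
        simp [stepCost, hd]
      have h2 : stepCost x y v (v.1 + 1, v.2) = 1 := by
        have hd : (v.1 + 1, v.2) ≠ (v.1 + 1, v.2 + 1) := by simp
        simp [stepCost, hd]
      rw [h1, h2]; push_cast; omega
  · -- vertical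
    subst h
    have hne2 : clh J v.2 ≠ clh J (v.2 + 1) :=
      fun hh => hne (Prod.ext rfl hh)
    have hcl : clh J (v.2 + 1) = clh J v.2 + 1 := by
      simp only [clh] at hne2 ⊢; omega
    constructor
    · right; left
      have : cl J (v.1, v.2 + 1) = ((cl J v).1, (cl J v).2 + 1) := by
        simp only [cl, hcl]
      exact this
    · have h1 : stepCost x y (cl J v) (cl J (v.1, v.2 + 1)) = 1 := by
        have hd : cl J (v.1, v.2 + 1) ≠ ((cl J v).1 + 1, (cl J v).2 + 1) := by
          simp only [cl, ne_eq, Prod.mk.injEq, not_and]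
          intro hh; omega
        simp [stepCost, hd]
      have h2 : stepCost x y v (v.1, v.2 + 1) = 1 := by
        have hd : ((v.1, v.2 + 1) : ℕ × ℕ) ≠ (v.1 + 1, v.2 + 1) := by
          simp only [ne_eq, Prod.mk.injEq, not_and]; intro hh; omega
        simp [stepCost, hd]
      rw [h1, h2]
      have ha := phi_anti J v (v.1, v.2 + 1) (by simp)
      have hb := psi_mono J v (v.1, v.2 + 1) (by simp)
      omega
  · -- diagonal
    subst h
    by_cases hcl : clh J (v.2 + 1) = clh J v.2
    · -- flattened: becomes horizontal
      constructor
      · left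
        have : cl J (v.1 + 1, v.2 + 1) = ((cl J v).1 + 1, (cl J v).2) := by
          simp only [cl, hcl]
        exact this
      · have h1 : stepCost x y (cl J v) (cl J (v.1 + 1, v.2 + 1)) = 1 := by
          have hd : cl J (v.1 + 1, v.2 + 1) ≠ ((cl J v).1 + 1, (cl J v).2 + 1) := by
            simp only [cl, ne_eq, Prod.mk.injEq, not_and]
            intro _; omega
          simp [stepCost, hd]
        rw [h1]
        have hnn : (0:ℤ) ≤ stepCost x y v (v.1 + 1, v.2 + 1) := Int.ofNat_nonneg _
        have hside : v.2 + 1 ≤ J.1 ∨ J.2 ≤ v.2 := by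
          simp only [clh] at hcl; omega
        simp only [phi, psi]
        rcases hside with hs | hs <;> omega
    · -- unflattened: cl v = v, cl w = w
      have h1 : clh J v.2 = v.2 ∧ clh J (v.2 + 1) = v.2 + 1 := by
        simp only [clh] at hcl ⊢; omega
      have hv : cl J v = v := Prod.ext rfl h1.1
      have hw : cl J (v.1 + 1, v.2 + 1) = (v.1 + 1, v.2 + 1) := Prod.ext rfl h1.2
      rw [hv, hw]
      refine ⟨Or.inr (Or.inr rfl), ?_⟩
      have ha := phi_anti J v (v.1 + 1, v.2 + 1) (by simp)
      have hb := psi_mono J v (v.1 + 1, v.2 + 1) (by simp)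
      omega

lemma clamp_path {α : Type*} [DecidableEq α] (x y : List α) (J : ℕ × ℕ) (hJ : J.1 ≤ J.2) :
    ∀ σ : List (ℕ × ℕ), σ.Chain' IsStep → ∀ s e : ℕ × ℕ,
      σ.head? = some s → σ.getLast? = some e →
    ∃ τ', IsPathFrom τ' (cl J s) (cl J e) ∧
      (pathCost x y τ' : ℤ) ≤
        pathCost x y σ + (phi J s - phi J e) + (psi J e - psi J s) := by
  intro σ
  induction σ with
  | nil => intro _ s e hs; simp at hs
  | cons v rest ih =>
    intro hc s e hs he
    simp only [head?_cons, Option.some_inj] at hs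
    subst hs
    cases rest with
    | nil =>
      simp only [getLast?_singleton, Option.some_inj] at he
      subst he
      exact ⟨[cl J v], ⟨isChain_singleton _, rfl, rfl⟩, by simp [pathCost]⟩
    | cons w rest' =>
      have hstep : IsStep v w := (isChain_cons_cons.mp hc).1
      have hc' : (w :: rest').Chain' IsStep := (isChain_cons_cons.mp hc).2
      have he' : (w :: rest').getLast? = some e := by
        rw [getLast?_cons_cons] at he; exact he
      obtain ⟨τ', hτ', hcost⟩ := ih hc' w e rfl he'
      rw [pathCost_cons_cons]
      by_cases hne : cl J v = cl J w
      · refine ⟨τ', by rwa [hne], ?_⟩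
        have hv1 : v.1 = w.1 := (congrArg Prod.fst hne :)
        have hw : w = (v.1, v.2 + 1) := by
          rcases hstep with h | h | h
          · exfalso; rw [h] at hv1; simp at hv1
          · exact h
          · exfalso; rw [h] at hv1; simp at hv1
        have hcost2 : (0:ℤ) ≤ stepCost x y v w + (phi J v - phi J w) + (psi J w - psi J v) := by
          have hnn : (0:ℤ) ≤ stepCost x y v w := Int.ofNat_nonneg _
          have ha := phi_anti J v w (by rw [hw]; exact Nat.le_succ _)
          have hb := psi_mono J v w (by rw [hw]; exact Nat.le_succ _)
          omega
        push_cast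
        omega
      · obtain ⟨hstep', hsc⟩ := step_clamp x y J hJ hstep hne
        obtain ⟨hpf, hpc⟩ := cons_path x y hτ' (cl J v) hstep'
        refine ⟨cl J v :: τ', hpf, ?_⟩
        rw [hpc]
        push_cast
        omega

lemma vert_path {α : Type*} [DecidableEq α] (x y : List α) (a : ℕ) :
    ∀ k b : ℕ, ∃ τ, IsPathFrom τ (a, b) (a, b + k) ∧ pathCost x y τ = k := by
  intro k
  induction k with
  | zero => intro b; exact ⟨[(a, b)], ⟨isChain_singleton _, rfl, rfl⟩, by simp [pathCost]⟩
  | succ k ih =>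
    intro b
    obtain ⟨τ, hτ, hcost⟩ := ih (b + 1)
    have hs : IsStep (a, b) (a, b + 1) := Or.inr (Or.inl rfl)
    obtain ⟨hpf, hpc⟩ := cons_path x y hτ (a, b) hs
    have harr : b + 1 + k = b + (k + 1) := by omega
    rw [harr] at hpf
    refine ⟨(a, b) :: τ, hpf, ?_⟩
    rw [hpc, hcost]
    have h1 : stepCost x y (a, b) (a, b + 1) = 1 := by
      have hd : ((a, b + 1) : ℕ × ℕ) ≠ (a + 1, b + 1) := by
        simp only [ne_eq, Prod.mk.injEq, not_and]; intro hh; omega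
      simp [stepCost, hd]
    omega

lemma path_append {α : Type*} [DecidableEq α] (x y : List α) :
    ∀ (τ1 : List (ℕ × ℕ)) (τ2 : List (ℕ × ℕ)) (a b c : ℕ × ℕ),
      IsPathFrom τ1 a b → IsPathFrom τ2 b c →
    ∃ τ3, IsPathFrom τ3 a c ∧ pathCost x y τ3 = pathCost x y τ1 + pathCost x y τ2 := by
  intro τ1
  induction τ1 with
  | nil => intro τ2 a b c h1; simp [IsPathFrom] at h1
  | cons v rest ih =>
    intro τ2 a b c h1 h2
    obtain ⟨hc, hh, hl⟩ := h1
    simp only [head?_cons, Option.some_inj] at hh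
    subst hh
    cases rest with
    | nil =>
      simp only [getLast?_singleton, Option.some_inj] at hl
      subst hl
      exact ⟨τ2, h2, by simp [pathCost]⟩
    | cons w rest' =>
      have hstep : IsStep v w := (isChain_cons_cons.mp hc).1
      have hc' : (w :: rest').Chain' IsStep := (isChain_cons_cons.mp hc).2
      have hl' : (w :: rest').getLast? = some b := by
        rw [getLast?_cons_cons] at hl; exact hl
      obtain ⟨τ3, hτ3, hcost⟩ := ih τ2 w b c ⟨hc', rfl, hl'⟩ h2
      obtain ⟨hpf, hpc⟩ := cons_path x y hτ3 v hstep
      refine ⟨v :: τ3, hpf, ?_⟩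
      rw [hpc, hcost, pathCost_cons_cons]
      omega

end Stmt5Aux


/-- if the box I'×J' (1-δ)-covers τ then
ncost(I'×J') ≤ ncost(τ_{I'}) + 2δ. -/
theorem stmt5 {α : Type*} [DecidableEq α] (x y : List α) (τ σ : List (ℕ × ℕ))
    (I' J' : ℕ × ℕ) (δ : ℚ) (hδ : 0 ≤ δ)
    (hI : I'.1 < I'.2) (hJ : J'.1 ≤ J'.2)
    (hτ : IsPath τ) (hσ : IsCrossSubpath τ σ I')
    (hcov : CoversAt δ I' J' σ) :
    (boxCost x y I' J' : ℚ) / ((I'.2 : ℚ) - (I'.1 : ℚ)) ≤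
      (pathCost x y σ : ℚ) / ((I'.2 : ℚ) - (I'.1 : ℚ)) + 2 * δ := by
  obtain ⟨hinf, hne, hboxσ, hhead, hlast, -, -⟩ := hσ
  obtain ⟨s, e, hs, he, hcov1, hcov2⟩ := hcov
  have hchain : σ.Chain' IsStep := List.IsChain.infix hτ hinf
  rw [hs] at hhead
  rw [he] at hlast
  simp only [Option.map_some, Option.some_inj] at hhead hlast
  obtain ⟨τ', hτ', hcostτ'⟩ := Stmt5Aux.clamp_path x y J' hJ σ hchain s e hs he
  have hge1 : J'.1 ≤ Stmt5Aux.clh J' s.2 := by simp only [Stmt5Aux.clh]; omega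
  have hle2 : Stmt5Aux.clh J' e.2 ≤ J'.2 := by simp only [Stmt5Aux.clh]; omega
  obtain ⟨τp, hp, hcp⟩ := Stmt5Aux.vert_path x y I'.1 (Stmt5Aux.clh J' s.2 - J'.1) J'.1
  rw [show J'.1 + (Stmt5Aux.clh J' s.2 - J'.1) = Stmt5Aux.clh J' s.2 by omega] at hp
  obtain ⟨τs, hsfx, hcs⟩ :=
    Stmt5Aux.vert_path x y I'.2 (J'.2 - Stmt5Aux.clh J' e.2) (Stmt5Aux.clh J' e.2)
  rw [show Stmt5Aux.clh J' e.2 + (J'.2 - Stmt5Aux.clh J' e.2) = J'.2 by omega] at hsfx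
  have hclS : Stmt5Aux.cl J' s = (I'.1, Stmt5Aux.clh J' s.2) := by
    simp [Stmt5Aux.cl, hhead]
  have hclE : Stmt5Aux.cl J' e = (I'.2, Stmt5Aux.clh J' e.2) := by
    simp [Stmt5Aux.cl, hlast]
  rw [hclS, hclE] at hτ'
  obtain ⟨τ1, h1, hc1⟩ := Stmt5Aux.path_append x y τp τ' _ _ _ hp hτ'
  obtain ⟨τfull, hfull, hcfull⟩ := Stmt5Aux.path_append x y τ1 τs _ _ _ h1 hsfx
  have hmem : boxCost x y I' J' ≤ pathCost x y τfull :=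
    Nat.sInf_le ⟨τfull, hfull, rfl⟩
  have key : (boxCost x y I' J' : ℤ) ≤ (pathCost x y σ : ℤ)
      + max ((s.2 : ℤ) - (J'.1 : ℤ)) ((J'.1 : ℤ) - (s.2 : ℤ))
      + max ((e.2 : ℤ) - (J'.2 : ℤ)) ((J'.2 : ℤ) - (e.2 : ℤ)) := by
    simp only [Stmt5Aux.phi, Stmt5Aux.psi] at hcostτ'
    simp only [Stmt5Aux.clh] at hcp hcs hge1 hle2
    omega
  have hμ : (0 : ℚ) < (I'.2 : ℚ) - (I'.1 : ℚ) := by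
    have : (I'.1 : ℚ) < (I'.2 : ℚ) := by exact_mod_cast hI
    linarith
  have keyQ : (boxCost x y I' J' : ℚ) ≤
      (pathCost x y σ : ℚ) + 2 * δ * ((I'.2 : ℚ) - (I'.1 : ℚ)) := by
    have h2 : ((boxCost x y I' J' : ℤ) : ℚ) ≤ (((pathCost x y σ : ℤ)
        + max ((s.2 : ℤ) - (J'.1 : ℤ)) ((J'.1 : ℤ) - (s.2 : ℤ))
        + max ((e.2 : ℤ) - (J'.2 : ℤ)) ((J'.2 : ℤ) - (e.2 : ℤ)) : ℤ) : ℚ) := by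
      exact_mod_cast key
    push_cast at h2
    have e1 : max ((s.2 : ℚ) - (J'.1 : ℚ)) ((J'.1 : ℚ) - (s.2 : ℚ)) = |(s.2 : ℚ) - (J'.1 : ℚ)| := by
      rw [abs_eq_max_neg, neg_sub]
    have e2 : max ((e.2 : ℚ) - (J'.2 : ℚ)) ((J'.2 : ℚ) - (e.2 : ℚ)) = |(e.2 : ℚ) - (J'.2 : ℚ)| := by
      rw [abs_eq_max_neg, neg_sub]
    rw [e1, e2] at h2
    linarith
  have h3 : (pathCost x y σ : ℚ) / ((I'.2 : ℚ) - (I'.1 : ℚ)) + 2 * δ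
      = ((pathCost x y σ : ℚ) + 2 * δ * ((I'.2 : ℚ) - (I'.1 : ℚ))) / ((I'.2 : ℚ) - (I'.1 : ℚ)) := by
    field_simp
  rw [h3]
  gcongr
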